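/- arXiv:1904.08846 — 2 statements merged into one kernel-verified Lean document; each statement's English description precedes it below -/
import Mathlib

section
/- Let x : Fin (n·l) → ℝ with congruence derivative sequence y_t = ∑_{j=0}^{n-1} x_{j·l+t}, and let z_q = ∑_{t=0}^{l-1} y_t · y_{(t+q) mod l} be its cyclic autocorrelation with l odd. Then the Fourier power spectrum of x at frequency n (i.e., at integer period l), |X(n)|² = |∑_{r=0}^{nl-1} x_r · exp(-2πi·r·n/(n·l))|², equals z_0 + 2·∑_{q=1}^{⌊l/2⌋} z_q · cos(2πq/l). -/
open Finset

private lemma exp_nat_two_pi (k : ℕ) : Complex.exp (2 * Real.pi * Complex.I * k) = 1 := by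
  have h := Complex.exp_int_mul_two_pi_mul_I (k : ℤ)
  rw [show ((k:ℤ):ℂ) * (2 * ↑Real.pi * Complex.I) = 2 * Real.pi * Complex.I * k by
    push_cast; ring] at h
  exact h

private lemma exp_mod (l : ℕ) (hl : 0 < l) (a : ℕ) :
    Complex.exp (2 * Real.pi * Complex.I * a / l) =
      Complex.exp (2 * Real.pi * Complex.I * ((a % l : ℕ) : ℂ) / l) := by
  have hl' : (l:ℂ) ≠ 0 := by exact_mod_cast hl.ne'
  conv_lhs => rw [← Nat.div_add_mod a l]
  rw [show (2 * Real.pi * Complex.I * ((l * (a / l) + a % l : ℕ)) / l)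
      = 2 * Real.pi * Complex.I * ((a/l : ℕ):ℂ) + 2 * Real.pi * Complex.I * ((a % l : ℕ):ℂ) / l by
    push_cast; field_simp]
  rw [Complex.exp_add, exp_nat_two_pi, one_mul]

private lemma exp_mod_neg (l : ℕ) (hl : 0 < l) (a : ℕ) :
    Complex.exp (-(2 * Real.pi * Complex.I * a / l)) =
      Complex.exp (-(2 * Real.pi * Complex.I * ((a % l : ℕ) : ℂ) / l)) := by
  rw [Complex.exp_neg, Complex.exp_neg, exp_mod l hl a]

/-- The power spectrum of `x` at integer period `l` (frequency `n`) equals the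
autocorrelation expansion of its congruence derivative sequence, for odd `l`. -/
theorem fps_integer_period (n l : ℕ) (hn : 0 < n) (hl : 0 < l) (hodd : Odd l)
    (x : Fin (n * l) → ℝ) (y : Fin l → ℝ)
    (hy : ∀ t : Fin l, y t = ∑ j : Fin n,
      x ⟨j.1 * l + t.1, by have hj := j.2; have ht := t.2; calc
        j.1 * l + t.1 < j.1 * l + l := by omega
        _ = (j.1 + 1) * l := by ring
        _ ≤ n * l := Nat.mul_le_mul_right l (by omega)⟩)
    (z : ℕ → ℝ)
    (hz : ∀ q : ℕ, z q = ∑ t : Fin l, y t * y ⟨(t.1 + q) % l, Nat.mod_lt _ hl⟩) :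
    ‖∑ r : Fin (n * l), (x r : ℂ) *
        Complex.exp (-2 * Real.pi * Complex.I * r.1 * n / (n * l))‖ ^ 2 =
      z 0 + 2 * ∑ q ∈ Finset.Icc 1 (l / 2), z q * Real.cos (2 * Real.pi * q / l) := by
  have hl' : (l:ℂ) ≠ 0 := by exact_mod_cast hl.ne'
  have hn' : (n:ℂ) ≠ 0 := by exact_mod_cast hn.ne'
  set E : ℕ → ℂ := fun t => Complex.exp (-(2 * Real.pi * Complex.I * t / l)) with hE
  set S : ℂ := ∑ t : Fin l, (y t : ℂ) * E t.1 with hS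
  -- the embedding of pairs
  have fbound : ∀ p : Fin n × Fin l, p.1.1 * l + p.2.1 < n * l := by
    intro p
    calc p.1.1 * l + p.2.1 < p.1.1 * l + l := by have := p.2.2; omega
      _ = (p.1.1 + 1) * l := by ring
      _ ≤ n * l := Nat.mul_le_mul_right l (by have := p.1.2; omega)
  set f : Fin n × Fin l → Fin (n * l) := fun p => ⟨p.1.1 * l + p.2.1, fbound p⟩ with hf
  have hfbij : Function.Bijective f := by
    rw [Fintype.bijective_iff_injective_and_card]
    refine ⟨fun p p' h => ?_, by simp⟩
    have hv : p.1.1 * l + p.2.1 = p'.1.1 * l + p'.2.1 := congrArg Fin.val h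
    have ht2 : p.2.1 = p'.2.1 := by
      have h2 := congrArg (· % l) hv
      simpa [mul_comm _ l, Nat.mul_add_mod, Nat.mod_eq_of_lt p.2.2,
        Nat.mod_eq_of_lt p'.2.2] using h2
    have hj2 : p.1.1 = p'.1.1 := Nat.eq_of_mul_eq_mul_right hl (by omega)
    exact Prod.ext (Fin.ext hj2) (Fin.ext ht2)
  -- Step 1 : the DFT sum equals S
  have h1 : (∑ r : Fin (n * l), (x r : ℂ) *
      Complex.exp (-2 * Real.pi * Complex.I * r.1 * n / (n * l))) = S := by
    have hterm : ∀ r : Fin (n * l),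
        Complex.exp (-2 * Real.pi * Complex.I * r.1 * n / (n * l)) = E (r.1 % l) := by
      intro r
      rw [show (-2 * (Real.pi:ℂ) * Complex.I * r.1 * n / (n * l) : ℂ)
          = -(2 * Real.pi * Complex.I * (r.1:ℂ) / l) by field_simp]
      exact exp_mod_neg l hl r.1
    calc (∑ r : Fin (n * l), (x r : ℂ) *
          Complex.exp (-2 * Real.pi * Complex.I * r.1 * n / (n * l)))
        = ∑ r : Fin (n * l), (x r : ℂ) * E (r.1 % l) :=
          Finset.sum_congr rfl fun r _ => by rw [hterm r]
      _ = ∑ p : Fin n × Fin l, (x (f p) : ℂ) * E ((f p).1 % l) :=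
          (Fintype.sum_bijective f hfbij _ _ fun p => rfl).symm
      _ = ∑ p : Fin n × Fin l, (x (f p) : ℂ) * E p.2.1 := by
          refine Finset.sum_congr rfl fun p _ => ?_
          have : (f p).1 % l = p.2.1 := by
            show (p.1.1 * l + p.2.1) % l = p.2.1
            rw [mul_comm, Nat.mul_add_mod, Nat.mod_eq_of_lt p.2.2]
          rw [this]
      _ = ∑ t : Fin l, ∑ j : Fin n, (x (f (j, t)) : ℂ) * E t.1 := by
          rw [Fintype.sum_prod_type]; exact Finset.sum_comm
      _ = S := by
          refine Finset.sum_congr rfl fun t _ => ?_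
          rw [← Finset.sum_mul, hy t]
          push_cast
          rfl
  rw [h1]
  -- Step 2
  have h2 : ‖S‖ ^ 2 = (S * (starRingEnd ℂ) S).re := by
    rw [Complex.sq_norm, Complex.mul_conj, Complex.ofReal_re]
  -- Step 3
  have hconj : (starRingEnd ℂ) S
      = ∑ t : Fin l, (y t : ℂ) * Complex.exp (2 * Real.pi * Complex.I * t.1 / l) := by
    rw [hS, map_sum]
    refine Finset.sum_congr rfl fun t _ => ?_
    rw [map_mul, Complex.conj_ofReal, ← Complex.exp_conj]
    congr 1
    simp only [map_neg, map_div₀, map_mul, Complex.conj_I, Complex.conj_ofReal,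
      map_natCast, map_ofNat]
    ring
  have h3 : S * (starRingEnd ℂ) S
      = ∑ q : Fin l, (z q.1 : ℂ) * Complex.exp (2 * Real.pi * Complex.I * q.1 / l) := by
    rw [hconj, hS, Finset.sum_mul_sum]
    have hswap : ∀ t : Fin l,
        (∑ s : Fin l, ((y t : ℂ) * E t.1) *
          ((y s : ℂ) * Complex.exp (2 * Real.pi * Complex.I * s.1 / l)))
        = ∑ q : Fin l, (y t : ℂ) * (y (⟨(t.1 + q.1) % l, Nat.mod_lt _ hl⟩ : Fin l) : ℂ) *
            Complex.exp (2 * Real.pi * Complex.I * q.1 / l) := by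
      intro t
      have hσbij : Function.Bijective
          (fun q : Fin l => (⟨(t.1 + q.1) % l, Nat.mod_lt _ hl⟩ : Fin l)) := by
        rw [Fintype.bijective_iff_injective_and_card]
        refine ⟨fun q q' h => ?_, rfl⟩
        have hv : (t.1 + q.1) % l = (t.1 + q'.1) % l := congrArg Fin.val h
        have := Nat.ModEq.add_left_cancel' t.1 hv
        exact Fin.ext (by rwa [Nat.ModEq, Nat.mod_eq_of_lt q.2, Nat.mod_eq_of_lt q'.2] at this)
      refine (Fintype.sum_bijective _ hσbij
        (fun q : Fin l => (y t : ℂ) * (y (⟨(t.1 + q.1) % l, Nat.mod_lt _ hl⟩ : Fin l) : ℂ) *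
          Complex.exp (2 * Real.pi * Complex.I * q.1 / l))
        (fun s : Fin l => ((y t : ℂ) * E t.1) *
          ((y s : ℂ) * Complex.exp (2 * Real.pi * Complex.I * s.1 / l)))
        (fun q => ?_)).symm
      have hexp : E t.1 * Complex.exp (2 * Real.pi * Complex.I * (((t.1 + q.1 : ℕ)) : ℂ) / l)
          = Complex.exp (2 * Real.pi * Complex.I * q.1 / l) := by
        rw [hE]
        show Complex.exp _ * Complex.exp _ = _
        rw [← Complex.exp_add]
        congr 1
        push_cast
        field_simp
        ring
      show (y t : ℂ) * (y (⟨(t.1 + q.1) % l, Nat.mod_lt _ hl⟩ : Fin l) : ℂ) *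
          Complex.exp (2 * Real.pi * Complex.I * q.1 / l)
        = ((y t : ℂ) * E t.1) *
          ((y (⟨(t.1 + q.1) % l, Nat.mod_lt _ hl⟩ : Fin l) : ℂ) *
            Complex.exp (2 * Real.pi * Complex.I * (((t.1 + q.1) % l : ℕ) : ℂ) / l))
      rw [← exp_mod l hl (t.1 + q.1), ← hexp]
      ring
    calc (∑ t : Fin l, ∑ s : Fin l, ((y t : ℂ) * E t.1) *
          ((y s : ℂ) * Complex.exp (2 * Real.pi * Complex.I * s.1 / l)))
        = ∑ t : Fin l, ∑ q : Fin l,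
            (y t : ℂ) * (y (⟨(t.1 + q.1) % l, Nat.mod_lt _ hl⟩ : Fin l) : ℂ) *
              Complex.exp (2 * Real.pi * Complex.I * q.1 / l) :=
          Finset.sum_congr rfl fun t _ => hswap t
      _ = ∑ q : Fin l, ∑ t : Fin l,
            (y t : ℂ) * (y (⟨(t.1 + q.1) % l, Nat.mod_lt _ hl⟩ : Fin l) : ℂ) *
              Complex.exp (2 * Real.pi * Complex.I * q.1 / l) := Finset.sum_comm
      _ = ∑ q : Fin l, (z q.1 : ℂ) * Complex.exp (2 * Real.pi * Complex.I * q.1 / l) := by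
          refine Finset.sum_congr rfl fun q _ => ?_
          rw [hz q.1, ← Finset.sum_mul]
          push_cast
          rfl
  -- Step 4
  have h4 : (∑ q : Fin l, (z q.1 : ℂ) *
        Complex.exp (2 * Real.pi * Complex.I * q.1 / l)).re
      = ∑ q : Fin l, z q.1 * Real.cos (2 * Real.pi * q.1 / l) := by
    rw [Complex.re_sum]
    refine Finset.sum_congr rfl fun q _ => ?_
    rw [show (2 * (Real.pi:ℂ) * Complex.I * (q.1:ℂ) / l)
        = ((2 * Real.pi * q.1 / l : ℝ) : ℂ) * Complex.I by push_cast; ring]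
    rw [Complex.mul_re, Complex.ofReal_re, Complex.ofReal_im,
      Complex.exp_ofReal_mul_I_re]
    ring
  rw [h2, h3, h4]
  -- Step 5 : folding
  have hzsym : ∀ q, q ≤ l → z (l - q) = z q := by
    intro q hq
    have hσbij : Function.Bijective
        (fun s : Fin l => (⟨(s.1 + q) % l, Nat.mod_lt _ hl⟩ : Fin l)) := by
      rw [Fintype.bijective_iff_injective_and_card]
      refine ⟨fun s s' h => ?_, rfl⟩
      have hv : (s.1 + q) % l = (s'.1 + q) % l := congrArg Fin.val h
      have := Nat.ModEq.add_right_cancel' q hv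
      exact Fin.ext (by rwa [Nat.ModEq, Nat.mod_eq_of_lt s.2, Nat.mod_eq_of_lt s'.2] at this)
    have key : ∀ s : Fin l, ((s.1 + q) % l + (l - q)) % l = s.1 := by
      intro s
      rw [Nat.mod_add_mod, show s.1 + q + (l - q) = s.1 + l by omega,
        Nat.add_mod_right, Nat.mod_eq_of_lt s.2]
    rw [hz (l - q), hz q]
    refine (Fintype.sum_bijective _ hσbij _ _ fun s => ?_).symm
    show y s * y (⟨(s.1 + q) % l, _⟩ : Fin l)
      = y (⟨(s.1 + q) % l, _⟩ : Fin l) * y ⟨((s.1 + q) % l + (l - q)) % l, Nat.mod_lt _ hl⟩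
    have : (⟨((s.1 + q) % l + (l - q)) % l, Nat.mod_lt _ hl⟩ : Fin l) = s :=
      Fin.ext (key s)
    rw [this, mul_comm]
  obtain ⟨m, hm⟩ := hodd
  have hm2 : l / 2 = m := by omega
  have hgsym : ∀ a ∈ Finset.Icc (m + 1) (2 * m),
      z a * Real.cos (2 * Real.pi * a / l)
        = z (l - a) * Real.cos (2 * Real.pi * (l - a : ℕ) / l) := by
    intro a ha
    simp only [Finset.mem_Icc] at ha
    have hal : a ≤ l := by omega
    have hcast : ((l - a : ℕ) : ℝ) = (l : ℝ) - a := by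
      rw [Nat.cast_sub hal]
    have hlr : (l : ℝ) ≠ 0 := by positivity
    rw [hzsym a hal, hcast,
      show 2 * Real.pi * ((l:ℝ) - a) / l = 2 * Real.pi - 2 * Real.pi * a / l by
        field_simp,
      Real.cos_two_pi_sub]
  calc (∑ q : Fin l, z q.1 * Real.cos (2 * Real.pi * q.1 / l))
      = ∑ q ∈ Finset.range l, z q * Real.cos (2 * Real.pi * q / l) :=
        Fin.sum_univ_eq_sum_range (fun q => z q * Real.cos (2 * Real.pi * q / l)) l
    _ = z 0 + 2 * ∑ q ∈ Finset.Icc 1 (l / 2), z q * Real.cos (2 * Real.pi * q / l) := by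
        rw [show Finset.range l = insert 0 (Finset.Ico 1 l) by ext a; simp; omega,
          Finset.sum_insert (by simp)]
        have hdisj : Disjoint (Finset.Icc 1 m) (Finset.Icc (m + 1) (2 * m)) := by
          rw [Finset.disjoint_left]
          intro a h1 h2
          simp only [Finset.mem_Icc] at h1 h2
          omega
        rw [show Finset.Ico 1 l = Finset.Icc 1 m ∪ Finset.Icc (m + 1) (2 * m) by
            ext a; simp; omega,
          Finset.sum_union hdisj]
        have hrefl : ∑ a ∈ Finset.Icc (m + 1) (2 * m),
            z a * Real.cos (2 * Real.pi * a / l)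
            = ∑ a ∈ Finset.Icc 1 m, z a * Real.cos (2 * Real.pi * a / l) := by
          refine Finset.sum_nbij' (fun a => l - a) (fun a => l - a) ?_ ?_ ?_ ?_ ?_
          · intro a ha; simp only [Finset.mem_Icc] at ha ⊢; omega
          · intro a ha; simp only [Finset.mem_Icc] at ha ⊢; omega
          · intro a ha; simp only [Finset.mem_Icc] at ha; show l - (l - a) = a; omega
          · intro a ha; simp only [Finset.mem_Icc] at ha; show l - (l - a) = a; omega
          · exact hgsym
        rw [hrefl, hm2]
        have h0 : z 0 * Real.cos (2 * Real.pi * (0:ℕ) / l) = z 0 := by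
          norm_num
        rw [h0]
        ring
end

section
/- Let l be even and y : Fin l → ℝ. Then the power spectrum at the Nyquist frequency k = l/2 satisfies FPS(l/2) = (∑_{t=0}^{l-1} (-1)^t · y_t)², which using the paper's notation equals z_0 + 2·∑_{q=1}^{l/2-1} (-1)^q · z_q + 2·(-1)^{l/2}·w, where z_q is the cyclic autocorrelation and w = ∑_{t=0}^{l/2-1} y_t · y_{t+l/2}. -/
open Finset

/-- At the Nyquist frequency `k = l/2` (for even `l`), the power spectrum equals
`(∑ (-1)^t y_t)²`, which equals `z₀ + 2 ∑_{q=1}^{l/2-1} (-1)^q z_q + 2 (-1)^{l/2} w`. -/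
theorem fps_nyquist (l : ℕ) (hl : 0 < l) (heven : Even l) (y : Fin l → ℝ)
    (z : ℕ → ℝ)
    (hz : ∀ q : ℕ, z q = ∑ t : Fin l, y t * y ⟨(t.1 + q) % l, Nat.mod_lt _ hl⟩)
    (w : ℝ)
    (hw : w = ∑ t : Fin (l / 2), y ⟨t.1, by omega⟩ * y ⟨t.1 + l / 2, by omega⟩) :
    ‖∑ t : Fin l, (y t : ℂ) *
        Complex.exp (-2 * Real.pi * Complex.I * t.1 * (l / 2 : ℕ) / l)‖ ^ 2 =
      (∑ t : Fin l, (-1 : ℝ) ^ t.1 * y t) ^ 2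
    ∧ (∑ t : Fin l, (-1 : ℝ) ^ t.1 * y t) ^ 2 =
      z 0 + 2 * ∑ q ∈ Finset.Icc 1 (l / 2 - 1), (-1 : ℝ) ^ q * z q
        + 2 * (-1 : ℝ) ^ (l / 2) * w := by
  have hNZ : NeZero l := ⟨hl.ne'⟩
  have hl2 : 2 ≤ l := by
    obtain ⟨m, hm⟩ := heven; omega
  have hhalf : l / 2 + l / 2 = l := by
    obtain ⟨m, hm⟩ := heven; omega
  have hmod : ∀ a : ℕ, (-1 : ℝ) ^ (a % l) = (-1) ^ a := by
    intro a
    conv_rhs => rw [← Nat.div_add_mod a l]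
    rw [pow_add, pow_mul, heven.neg_one_pow, one_pow, one_mul]
  constructor
  · -- Part 1: the exponential at Nyquist is (-1)^t
    have hexp : ∀ t : Fin l, Complex.exp (-2 * Real.pi * Complex.I * t.1 * (l / 2 : ℕ) / l)
        = (-1 : ℂ) ^ t.1 := by
      intro t
      obtain ⟨m, hm⟩ := heven
      have hm0 : m ≠ 0 := by omega
      have h2 : l / 2 = m := by omega
      rw [h2]
      have hcast : ((l : ℕ) : ℂ) = 2 * m := by rw [hm]; push_cast; ring
      have harg : (-2 * Real.pi * Complex.I * t.1 * m / (l : ℕ) : ℂ)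
          = t.1 * (Real.pi * Complex.I * (-1)) := by
        rw [hcast]
        have hmne : (m : ℂ) ≠ 0 := Nat.cast_ne_zero.mpr hm0
        field_simp
      rw [harg, Complex.exp_nat_mul]
      congr 1
      rw [show (Real.pi * Complex.I * (-1) : ℂ) = -(Real.pi * Complex.I) by ring]
      rw [Complex.exp_neg, Complex.exp_pi_mul_I]
      norm_num
    have hsum : (∑ t : Fin l, (y t : ℂ) *
        Complex.exp (-2 * Real.pi * Complex.I * t.1 * (l / 2 : ℕ) / l))
        = ((∑ t : Fin l, (-1 : ℝ) ^ t.1 * y t : ℝ) : ℂ) := by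
      push_cast
      refine Finset.sum_congr rfl fun t _ => ?_
      rw [hexp t]
      ring
    rw [hsum, Complex.norm_real, Real.norm_eq_abs, sq_abs]
  · -- Part 2
    -- Step A : S² = ∑_{q ∈ range l} (-1)^q z q
    have key : (∑ t : Fin l, (-1 : ℝ) ^ t.1 * y t) ^ 2
        = ∑ q ∈ range l, (-1 : ℝ) ^ q * z q := by
      rw [← Fin.sum_univ_eq_sum_range (fun q => (-1 : ℝ) ^ q * z q)]
      simp only [hz]
      simp only [Finset.mul_sum]
      rw [Finset.sum_comm (γ := Fin l)]
      rw [sq, Finset.sum_mul_sum]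
      refine Finset.sum_congr rfl fun t _ => ?_
      rw [← Equiv.sum_comp (Equiv.addLeft t)
        (fun s => (-1 : ℝ) ^ t.1 * y t * ((-1) ^ s.1 * y s))]
      refine Finset.sum_congr rfl fun q _ => ?_
      simp only [Equiv.coe_addLeft]
      have hval : ((t + q : Fin l)).1 = (t.1 + q.1) % l := by simp [Fin.add_def]
      rw [hval, hmod, pow_add]
      have hone : (-1 : ℝ) ^ t.1 * (-1 : ℝ) ^ t.1 = 1 := by
        rw [← pow_add, ← two_mul, pow_mul]; norm_num
      have hfin : (⟨(t.1 + q.1) % l, Nat.mod_lt _ hl⟩ : Fin l) = t + q := by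
        apply Fin.ext; simp [Fin.add_def]
      rw [hfin]
      ring_nf
      rw [pow_mul, sq, hone, mul_one]
    -- symmetry of the autocorrelation
    have zsym : ∀ q : ℕ, q < l → z (l - q) = z q := by
      intro q hq
      rw [hz, hz]
      set c : Fin l := ⟨q, hq⟩ with hc
      rw [← Equiv.sum_comp (Equiv.addLeft c)
        (fun t => y t * y ⟨(t.1 + (l - q)) % l, Nat.mod_lt _ hl⟩)]
      refine Finset.sum_congr rfl fun t _ => ?_
      simp only [Equiv.coe_addLeft]
      have h1 : (c + t).1 = (q + t.1) % l := by simp [Fin.add_def, hc]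
      have h2 : (⟨((c + t).1 + (l - q)) % l, Nat.mod_lt _ hl⟩ : Fin l) = t := by
        apply Fin.ext
        simp only [h1]
        rw [Nat.mod_add_mod]
        have he : q + t.1 + (l - q) = t.1 + l := by omega
        rw [he, Nat.add_mod_right, Nat.mod_eq_of_lt t.isLt]
      have h3 : (⟨(t.1 + q) % l, Nat.mod_lt _ hl⟩ : Fin l) = c + t := by
        apply Fin.ext
        simp [h1, Nat.add_comm]
      rw [h2, h3, mul_comm]
    -- z (l/2) = 2 w via the helper function F
    set F : ℕ → ℝ := fun t => y ⟨t % l, Nat.mod_lt _ hl⟩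
      * y ⟨(t % l + l / 2) % l, Nat.mod_lt _ hl⟩ with hF
    have hwF : w = ∑ t ∈ range (l / 2), F t := by
      rw [hw, ← Fin.sum_univ_eq_sum_range F (l / 2)]
      refine Finset.sum_congr rfl fun t _ => ?_
      have ht : t.1 < l / 2 := t.isLt
      have e1 : t.1 % l = t.1 := Nat.mod_eq_of_lt (by omega)
      simp only [hF, e1]
      congr 1
      exact congrArg y (Fin.ext (Nat.mod_eq_of_lt (show t.1 + l / 2 < l by omega)).symm)
    have hz2 : z (l / 2) = 2 * w := by
      rw [hz]
      have hzF : (∑ t : Fin l, y t * y ⟨(t.1 + l / 2) % l, Nat.mod_lt _ hl⟩)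
          = ∑ t ∈ range l, F t := by
        rw [← Fin.sum_univ_eq_sum_range F l]
        refine Finset.sum_congr rfl fun t _ => ?_
        have e1 : t.1 % l = t.1 := Nat.mod_eq_of_lt t.isLt
        simp only [hF, e1]
      rw [hzF]
      conv_lhs => rw [← hhalf]
      rw [Finset.sum_range_add, hwF, two_mul]
      congr 1
      refine Finset.sum_congr rfl fun t ht => ?_
      rw [Finset.mem_range] at ht
      have e1 : (l / 2 + t) % l = l / 2 + t := Nat.mod_eq_of_lt (by omega)
      have e2 : (l / 2 + t + l / 2) % l = t := by
        have : l / 2 + t + l / 2 = t + l := by omega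
        rw [this, Nat.add_mod_right, Nat.mod_eq_of_lt (by omega)]
      have e3 : t % l = t := Nat.mod_eq_of_lt (by omega)
      have e4 : (t + l / 2) % l = t + l / 2 := Nat.mod_eq_of_lt (by omega)
      simp only [hF, e1, e2, e3, e4]
      rw [mul_comm]
      congr 1
      exact congrArg y (Fin.ext (Nat.add_comm _ _))
    -- Step B : split the range sum
    set Fq : ℕ → ℝ := fun q => (-1 : ℝ) ^ q * z q with hFq
    have hsplit : ∑ q ∈ range l, Fq q
        = (Fq 0 + ∑ i ∈ range (l / 2 - 1), Fq (i + 1))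
          + (Fq (l / 2) + ∑ i ∈ range (l / 2 - 1), Fq (l / 2 + (i + 1))) := by
      conv_lhs => rw [← hhalf]
      rw [Finset.sum_range_add]
      congr 1
      · conv_lhs => rw [show l / 2 = (l / 2 - 1) + 1 from by omega]
        rw [Finset.sum_range_succ', add_comm]
      · conv_lhs => rw [show l / 2 = (l / 2 - 1) + 1 from by omega]
        rw [Finset.sum_range_succ']
        rw [show (l / 2 - 1) + 1 + 0 = l / 2 from by omega, add_comm]
    have hrefl : ∑ i ∈ range (l / 2 - 1), Fq (l / 2 + (i + 1))
        = ∑ i ∈ range (l / 2 - 1), Fq (i + 1) := by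
      rw [← Finset.sum_range_reflect (fun i => Fq (l / 2 + (i + 1))) (l / 2 - 1)]
      refine Finset.sum_congr rfl fun i hi => ?_
      rw [Finset.mem_range] at hi
      have hq : l / 2 + (l / 2 - 1 - 1 - i + 1) = l - (i + 1) := by omega
      rw [hq]
      simp only [hFq]
      rw [zsym (i + 1) (by omega)]
      have h1 : (-1 : ℝ) ^ (l - (i + 1)) * (-1) ^ (i + 1) = 1 := by
        rw [← pow_add, show l - (i + 1) + (i + 1) = l from by omega, heven.neg_one_pow]
      have h2 : (-1 : ℝ) ^ (i + 1) * (-1) ^ (i + 1) = 1 := by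
        rw [← pow_add, ← two_mul, pow_mul]; norm_num
      have hpar : (-1 : ℝ) ^ (l - (i + 1)) = (-1) ^ (i + 1) :=
        mul_right_cancel₀ (pow_ne_zero _ (by norm_num)) (h1.trans h2.symm)
      rw [hpar]
    have hIcc : ∑ q ∈ Finset.Icc 1 (l / 2 - 1), (-1 : ℝ) ^ q * z q
        = ∑ i ∈ range (l / 2 - 1), Fq (i + 1) := by
      rw [show Finset.Icc 1 (l / 2 - 1) = Finset.Ico 1 (l / 2) by
        rw [← Finset.Ico_add_one_right_eq_Icc]; congr 1; omega]
      rw [Finset.sum_Ico_eq_sum_range]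
      refine Finset.sum_congr rfl fun i _ => ?_
      simp only [hFq]
      rw [Nat.add_comm]
    rw [key, hsplit, hrefl, hIcc]
    simp only [hFq, hz2]
    simp only [pow_zero, one_mul]
    ring
end
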